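/- Let (μ_N)_{N≥1} be probability measures, μ_N on Ω_N. If (μ_N) has a limit shape l under some scaling (r_N), then for every α ∈ (0,1), lim_{N→∞} μ_N{η ∈ Ω_N : q_N(η) > α·N} = 0; in particular (μ_N) does not exhibit gelation. -/

import Mathlib

open scoped Classical BigOperators Topology
open Filter MeasureTheory ProbabilityTheory Finset

noncomputable section

/-- `pc η k` is `n_k(η)`, the number of parts of size `k` in the partition `η`. -/
def pc {N : ℕ} (η : Nat.Partition N) (k : ℕ) : ℕ := Multiset.count k η.parts

/-- `qN η` is the size of the largest part of `η`. -/
def qN {N : ℕ} (η : Nat.Partition N) : ℕ := η.parts.sup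

/-- `nuAbove η u = ν(u;η)`, the number of parts of `η` of size `≥ u`. -/
def nuAbove {N : ℕ} (η : Nat.Partition N) (u : ℝ) : ℕ :=
  Multiset.card (η.parts.filter (fun k => u ≤ (k : ℝ)))

/-- probability of the set of partitions satisfying `P` under the mass function `μ`. -/
def prob {N : ℕ} (μ : Nat.Partition N → ℝ) (P : Nat.Partition N → Prop) : ℝ :=
  ∑ η ∈ Finset.univ.filter P, μ η

/-- `μ` is a sequence of probability measures, `μ N` on the partitions of `N` (for `N ≥ 1`). -/
def IsProbSeq (μ : ∀ N : ℕ, Nat.Partition N → ℝ) : Prop :=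
  ∀ N : ℕ, 1 ≤ N → (∀ η : Nat.Partition N, 0 ≤ μ N η) ∧ (∑ η : Nat.Partition N, μ N η) = 1

/-- `l` is the limit shape of the sequence of measures `μ` under the scaling `r`:
`l` is a continuous nonincreasing nonnegative function on `[0,∞)` of total integral `1`,
`r N > 0`, `r N / N → 0`, and for all `0 < a < b`, `ε > 0`, the `μ N`-probability that
`sup_{u ∈ [a,b]} |(r N / N)·ν(r N · u) - l u| < ε` tends to `1`. -/
def HasLimitShape (μ : ∀ N : ℕ, Nat.Partition N → ℝ) (r : ℕ → ℝ) (l : ℝ → ℝ) : Prop :=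
  (∀ N : ℕ, 1 ≤ N → 0 < r N) ∧
  Tendsto (fun N : ℕ => r N / (N : ℝ)) atTop (𝓝 0) ∧
  ContinuousOn l (Set.Ici 0) ∧
  AntitoneOn l (Set.Ici 0) ∧
  (∀ u : ℝ, 0 ≤ u → 0 ≤ l u) ∧
  (∫ u in Set.Ioi (0:ℝ), l u) = 1 ∧
  (∀ a b ε : ℝ, 0 < a → a < b → 0 < ε →
    Tendsto (fun N : ℕ => prob (μ N) (fun η =>
        sSup ((fun u => |r N / (N : ℝ) * (nuAbove η (r N * u) : ℝ) - l u|) '' Set.Icc a b) < ε))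
      atTop (𝓝 1))



lemma aux_sup_mem (s : Multiset ℕ) (h : 0 < s.sup) : s.sup ∈ s := by
  induction s using Multiset.induction with
  | empty => simp at h
  | cons a s ih =>
    rw [Multiset.sup_cons] at h ⊢
    rcases le_total s.sup a with hle | hle
    · rw [sup_eq_left.mpr hle]; exact Multiset.mem_cons_self _ _
    · rw [sup_eq_right.mpr hle] at h ⊢
      exact Multiset.mem_cons_of_mem (ih h)

lemma aux_perPart (r Δ aa : ℝ) (hr : 0 < r) (hΔ : 0 < Δ) (ha : 0 ≤ aa) (m k : ℕ) :
    r * Δ * ((((Finset.range m).filter (fun i : ℕ => r * (aa + ((i:ℝ) + 1) * Δ) ≤ (k:ℝ))).card : ℝ) : ℝ) ≤ (k:ℝ) := by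
  set F := (Finset.range m).filter (fun i : ℕ => r * (aa + ((i:ℝ) + 1) * Δ) ≤ (k:ℝ)) with hF
  rcases F.eq_empty_or_nonempty with h | h
  · rw [h]; simp
  · have hj := F.max'_mem h
    have hjk : r * (aa + ((F.max' h : ℝ) + 1) * Δ) ≤ (k:ℝ) := (Finset.mem_filter.mp hj).2
    have hsub : F ⊆ Finset.range (F.max' h + 1) := fun i hi =>
      Finset.mem_range.mpr (Nat.lt_succ_of_le (F.le_max' i hi))
    have hcard : (F.card : ℝ) ≤ (F.max' h : ℝ) + 1 := by
      have := Finset.card_le_card hsub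
      rw [Finset.card_range] at this
      exact_mod_cast this
    nlinarith [mul_nonneg hr.le ha, mul_pos hr hΔ,
      mul_le_mul_of_nonneg_left hcard (mul_pos hr hΔ).le]

lemma aux_sum_card (m : ℕ) (r Δ aa : ℝ) (hr : 0 < r) (hΔ : 0 < Δ) (ha : 0 ≤ aa)
    (s : Multiset ℕ) :
    r * Δ * (∑ i ∈ Finset.range m,
      ((s.filter (fun k : ℕ => r * (aa + ((i:ℝ) + 1) * Δ) ≤ (k:ℝ))).card : ℝ)) ≤ (s.sum : ℝ) := by
  induction s using Multiset.induction with
  | empty => simp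
  | cons c s ih =>
    have hstep : ∀ i : ℕ, ((Multiset.filter (fun k : ℕ => r * (aa + ((i:ℝ) + 1) * Δ) ≤ (k:ℝ)) (c ::ₘ s)).card : ℝ)
        = (if r * (aa + ((i:ℝ) + 1) * Δ) ≤ (c:ℝ) then (1:ℝ) else 0)
          + ((Multiset.filter (fun k : ℕ => r * (aa + ((i:ℝ) + 1) * Δ) ≤ (k:ℝ)) s).card : ℝ) := by
      intro i
      rw [Multiset.filter_cons, Multiset.card_add]
      push_cast
      congr 1
      split <;> simp
    have hper := aux_perPart r Δ aa hr hΔ ha m c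
    have hcount : (∑ i ∈ Finset.range m, (if r * (aa + ((i:ℝ) + 1) * Δ) ≤ (c:ℝ) then (1:ℝ) else 0))
        = ((((Finset.range m).filter (fun i : ℕ => r * (aa + ((i:ℝ) + 1) * Δ) ≤ (c:ℝ))).card : ℝ) : ℝ) := by
      rw [Finset.sum_boole]
    simp only [hstep, Multiset.sum_cons]
    rw [Finset.sum_add_distrib, mul_add, hcount, Nat.cast_add]
    linarith

lemma nuAbove_eq {N : ℕ} (η : Nat.Partition N) (u : ℝ) :
    nuAbove η u = Multiset.card (Multiset.filter (fun k : ℕ => u ≤ (k:ℝ)) η.parts) := by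
  unfold nuAbove
  show Multiset.card (Multiset.filter _ (η.parts.bind (fun a => {(a:ℝ)}))) = _
  rw [Multiset.bind_singleton, Multiset.filter_map, Multiset.card_map]
  rfl

lemma aux_key {N : ℕ} (η : Nat.Partition N) (r α aa Δ : ℝ) (m : ℕ)
    (hr : 0 < r) (ha : 0 < aa) (hΔ : 0 < Δ) (hα : 0 < α)
    (hq : α * (N:ℝ) < (qN η : ℝ)) (hgel : r * (aa + (m:ℝ) * Δ) ≤ α * (N:ℝ)) :
    α * (N:ℝ) + r * Δ * (∑ i ∈ Finset.range m, (nuAbove η (r * (aa + ((i:ℝ) + 1) * Δ)) : ℝ))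
      - r * Δ * (m:ℝ) ≤ (N:ℝ) := by
  have hN0 : (0:ℝ) ≤ α * N := by positivity
  have hq0 : 0 < qN η := by
    have : (0:ℝ) < (qN η : ℝ) := lt_of_le_of_lt hN0 hq
    exact_mod_cast this
  have hmem : qN η ∈ η.parts := aux_sup_mem _ hq0
  set Q := qN η with hQ
  have hparts : Q ::ₘ η.parts.erase Q = η.parts := Multiset.cons_erase hmem
  have hsum : (Q:ℝ) + ((η.parts.erase Q).sum : ℝ) = (N:ℝ) := by
    have h2 := η.parts_sum
    rw [← hparts, Multiset.sum_cons] at h2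
    exact_mod_cast congrArg (Nat.cast : ℕ → ℝ) h2
  have hnu : ∀ i ∈ Finset.range m,
      (nuAbove η (r * (aa + ((i:ℝ) + 1) * Δ)) : ℝ)
        = 1 + (((η.parts.erase Q).filter (fun k : ℕ => r * (aa + ((i:ℝ) + 1) * Δ) ≤ (k:ℝ))).card : ℝ) := by
    intro i hi
    have him : (i:ℝ) + 1 ≤ (m:ℝ) := by
      have := Finset.mem_range.mp hi
      exact_mod_cast Nat.succ_le_of_lt this
    have hle : r * (aa + ((i:ℝ) + 1) * Δ) ≤ (Q:ℝ) := by
      have h1 : ((i:ℝ)+1)*Δ ≤ (m:ℝ)*Δ := mul_le_mul_of_nonneg_right him hΔ.le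
      have h2 : r*(aa + ((i:ℝ)+1)*Δ) ≤ r*(aa+(m:ℝ)*Δ) :=
        mul_le_mul_of_nonneg_left (by linarith) hr.le
      linarith
    rw [nuAbove_eq]
    conv_lhs => rw [← hparts]
    rw [Multiset.filter_cons, if_pos hle, Multiset.card_add, Multiset.card_singleton]
    push_cast
    ring
  rw [Finset.sum_congr rfl hnu, Finset.sum_add_distrib, Finset.sum_const, Finset.card_range,
    nsmul_eq_mul, mul_one]
  have hmain := aux_sum_card m r Δ aa hr hΔ ha.le (η.parts.erase Q)
  nlinarith [hmain, hsum, hq]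

lemma aux_riemann (l : ℝ → ℝ) (a b : ℝ) (ha : 0 < a) (hab : a < b)
    (hcont : ContinuousOn l (Set.Ici 0)) (hanti : AntitoneOn l (Set.Ici 0))
    (hnn : ∀ u, 0 ≤ u → 0 ≤ l u) (m : ℕ) (hm : 1 ≤ m) :
    ∫ u in a..b, l u ≤ ((b - a)/m) * (∑ i ∈ Finset.range m, l (a + ((i:ℝ)+1) * ((b-a)/m)))
      + l a * ((b-a)/m) := by
  have hm0 : (0:ℝ) < m := by exact_mod_cast hm
  set Δ := (b - a)/m with hΔdef
  have hΔ0 : 0 < Δ := div_pos (by linarith) hm0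
  set u : ℕ → ℝ := fun i => a + i * Δ with hu
  have hmΔ : (m:ℝ) * Δ = b - a := by
    rw [hΔdef]; field_simp
  have hua : ∀ i : ℕ, a ≤ u i := by
    intro i
    have : (0:ℝ) ≤ (i:ℝ) * Δ := mul_nonneg (Nat.cast_nonneg i) hΔ0.le
    simp only [hu]; linarith
  have hub : ∀ i : ℕ, i ≤ m → u i ≤ b := by
    intro i hi
    have : (i:ℝ) * Δ ≤ (m:ℝ) * Δ := by
      apply mul_le_mul_of_nonneg_right _ hΔ0.le
      exact_mod_cast hi
    simp only [hu]; linarith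
  have hInt : ∀ k < m, IntervalIntegrable l MeasureTheory.volume (u k) (u (k+1)) := by
    intro k hk
    apply ContinuousOn.intervalIntegrable
    apply hcont.mono
    rw [Set.uIcc_of_le (by simp only [hu]; push_cast; nlinarith)]
    intro x hx
    exact le_trans (le_trans ha.le (hua k)) hx.1
  have hadj := intervalIntegral.sum_integral_adjacent_intervals (μ := MeasureTheory.volume)
    (f := l) hInt
  have hu0 : u 0 = a := by simp [hu]
  have hum : u m = b := by simp only [hu]; rw [hmΔ]; ring
  have hpiece : ∀ k ∈ Finset.range m, (∫ x in (u k)..(u (k+1)), l x) ≤ Δ * l (u k) := by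
    intro k hk
    have hk' := Finset.mem_range.mp hk
    have hle : u k ≤ u (k+1) := by simp only [hu]; push_cast; nlinarith
    have h1 : (∫ x in (u k)..(u (k+1)), l x) ≤ ∫ _x in (u k)..(u (k+1)), l (u k) := by
      apply intervalIntegral.integral_mono_on hle (hInt k hk') intervalIntegrable_const
      intro x hx
      exact hanti (le_trans ha.le (hua k)) (le_trans (le_trans ha.le (hua k)) hx.1) hx.1
    have h2 : (∫ _x in (u k)..(u (k+1)), l (u k)) = Δ * l (u k) := by
      rw [intervalIntegral.integral_const, smul_eq_mul]
      congr 1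
      simp only [hu]; push_cast; ring
    linarith
  have hIle : ∫ x in a..b, l x ≤ ∑ k ∈ Finset.range m, Δ * l (u k) := by
    rw [← hu0, ← hum, ← hadj]
    exact Finset.sum_le_sum hpiece
  obtain ⟨n, rfl⟩ : ∃ n, m = n + 1 := ⟨m - 1, by omega⟩
  have hshift : ∑ k ∈ Finset.range (n+1), Δ * l (u k)
      = (∑ k ∈ Finset.range n, Δ * l (u (k+1))) + Δ * l (u 0) :=
    Finset.sum_range_succ' _ _
  have hlast : ∑ k ∈ Finset.range (n+1), Δ * l (u (k+1))
      = (∑ k ∈ Finset.range n, Δ * l (u (k+1))) + Δ * l (u (n+1)) :=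
    Finset.sum_range_succ _ _
  have hnnlast : 0 ≤ Δ * l (u (n+1)) :=
    mul_nonneg hΔ0.le (hnn _ (le_trans ha.le (hua _)))
  have hgoal : ∑ k ∈ Finset.range (n+1), Δ * l (u (k+1))
      = Δ * ∑ i ∈ Finset.range (n+1), l (a + ((i:ℝ)+1) * Δ) := by
    rw [Finset.mul_sum]
    apply Finset.sum_congr rfl
    intro i _
    congr 2
    simp only [hu]; push_cast; ring
  rw [hu0] at hshift
  calc ∫ x in a..b, l x ≤ ∑ k ∈ Finset.range (n+1), Δ * l (u k) := hIle
    _ = (∑ k ∈ Finset.range n, Δ * l (u (k+1))) + Δ * l a := hshift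
    _ ≤ (∑ k ∈ Finset.range (n+1), Δ * l (u (k+1))) + Δ * l a := by
        rw [hlast]; linarith
    _ = Δ * (∑ i ∈ Finset.range (n+1), l (a + ((i:ℝ)+1) * Δ)) + l a * Δ := by
        rw [hgoal]; ring

lemma aux_prob_le {N : ℕ} (μ : Nat.Partition N → ℝ) (hnn : ∀ η, 0 ≤ μ η)
    (htot : ∑ η : Nat.Partition N, μ η = 1)
    (P G : Nat.Partition N → Prop) (hdisj : ∀ η, P η → ¬ G η) :
    prob μ P ≤ 1 - prob μ G := by
  have hdisj2 : Disjoint (Finset.univ.filter P) (Finset.univ.filter G) := by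
    rw [Finset.disjoint_left]
    intro η h1 h2
    exact hdisj η (Finset.mem_filter.mp h1).2 (Finset.mem_filter.mp h2).2
  have h3 : prob μ P + prob μ G = ∑ η ∈ (Finset.univ.filter P ∪ Finset.univ.filter G), μ η :=
    (Finset.sum_union hdisj2).symm
  have h4 : (∑ η ∈ (Finset.univ.filter P ∪ Finset.univ.filter G), μ η)
      ≤ ∑ η : Nat.Partition N, μ η :=
    Finset.sum_le_sum_of_subset_of_nonneg (Finset.subset_univ _) (fun η _ _ => hnn η)
  rw [htot] at h4
  linarith

set_option maxHeartbeats 2000000 in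
theorem stmt1 (μ : ∀ N : ℕ, Nat.Partition N → ℝ) (hμ : IsProbSeq μ)
    (r : ℕ → ℝ) (l : ℝ → ℝ) (hls : HasLimitShape μ r l) :
    ∀ α : ℝ, 0 < α → α < 1 →
      Tendsto (fun N : ℕ => prob (μ N) (fun η => α * (N : ℝ) < (qN η : ℝ)))
        atTop (𝓝 0) := by
  intro α hα0 hα1
  obtain ⟨hrpos, hρ0, hcont, hanti, hlnn, hint, hprob⟩ := hls
  have hInt : MeasureTheory.IntegrableOn l (Set.Ioi 0) := by
    by_contra h
    rw [MeasureTheory.integral_undef h] at hint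
    norm_num at hint
  set s : ℕ → Set ℝ := fun n => Set.Ioc (1/((n:ℝ)+1)) ((n:ℝ)+1) with hs
  have hsm : ∀ n, MeasurableSet (s n) := fun n => measurableSet_Ioc
  have hmono : Monotone s := by
    intro p q hpq
    have hpq' : (p:ℝ) ≤ (q:ℝ) := by exact_mod_cast hpq
    apply Set.Ioc_subset_Ioc
    · apply one_div_le_one_div_of_le (by positivity)
      linarith
    · linarith
  have hUnion : ⋃ n, s n = Set.Ioi 0 := by
    ext x
    simp only [hs, Set.mem_iUnion, Set.mem_Ioc, Set.mem_Ioi]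
    constructor
    · rintro ⟨n, h1, _⟩
      exact lt_trans (by positivity) h1
    · intro hx
      obtain ⟨n, hn⟩ := exists_nat_ge (max (1/x) x)
      have h1 : 1/x ≤ (n:ℝ) := le_trans (le_max_left _ _) hn
      have h2 : x ≤ (n:ℝ) := le_trans (le_max_right _ _) hn
      refine ⟨n, ?_, by linarith⟩
      rw [div_lt_iff₀ (by positivity)]
      have hxx : x * (1/x) = 1 := by field_simp
      nlinarith
  have htm := MeasureTheory.tendsto_setIntegral_of_monotone hsm hmono (hUnion ▸ hInt)
  rw [hUnion, hint] at htm
  have h14 : (1 - α/4 : ℝ) < 1 := by linarith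
  obtain ⟨n, hn⟩ := ((htm.eventually (eventually_gt_nhds h14)).and (eventually_ge_atTop 1)).exists
  have hn1 : 1 ≤ n := hn.2
  set a : ℝ := 1/((n:ℝ)+1) with hadef
  set b : ℝ := ((n:ℝ)+1) with hbdef
  have ha0 : 0 < a := by positivity
  have hb2 : (2:ℝ) ≤ b := by
    have : (1:ℝ) ≤ (n:ℝ) := by exact_mod_cast hn1
    simp only [hbdef]; linarith
  have ha1 : a ≤ 1 := by
    rw [hadef, div_le_one (by positivity)]
    linarith [Nat.cast_nonneg (α := ℝ) n]
  have hab : a < b := by linarith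
  have hba : 0 < b - a := by linarith
  have hIab : 1 - α/4 < ∫ u in a..b, l u := by
    rw [intervalIntegral.integral_of_le hab.le]
    exact hn.1
  -- choose m
  obtain ⟨m, hm⟩ := exists_nat_gt (max 1 (8 * l a * (b - a) / α))
  have hm1 : 1 ≤ m := by
    have h1 : (1:ℝ) < m := lt_of_le_of_lt (le_max_left _ _) hm
    exact_mod_cast h1.le
  have hm0 : (0:ℝ) < m := by exact_mod_cast hm1
  obtain ⟨Δ, hΔdef⟩ : ∃ d : ℝ, d = (b - a)/m := ⟨_, rfl⟩
  have hΔ0 : 0 < Δ := hΔdef ▸ div_pos hba hm0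
  have hmΔ : (m:ℝ) * Δ = b - a := by
    rw [hΔdef]; field_simp
  have hla0 : 0 ≤ l a := hlnn a ha0.le
  have hlaΔ : l a * Δ < α/8 := by
    have h8 : 8 * l a * (b-a)/α < m := lt_of_le_of_lt (le_max_right _ _) hm
    rw [div_lt_iff₀ hα0] at h8
    have he : l a * Δ = (l a * (b-a))/m := by rw [hΔdef]; ring
    rw [he, div_lt_iff₀ hm0]
    nlinarith
  obtain ⟨ε, hεdef⟩ : ∃ e : ℝ, e = α/(8*(b-a)) := ⟨_, rfl⟩
  have hε0 : 0 < ε := by rw [hεdef]; positivity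
  have hεba : ε * (b - a) = α/8 := by
    rw [hεdef]
    field_simp
  obtain ⟨L, hL⟩ : ∃ L : ℝ, L = ∑ i ∈ Finset.range m, l (a + ((i:ℝ)+1)*Δ) := ⟨_, rfl⟩
  have hR := aux_riemann l a b ha0 hab hcont hanti hlnn m hm1
  rw [← hΔdef, ← hL] at hR
  have hΔL : 1 - α/4 - α/8 < Δ * L := by linarith
  have hG := hprob a b ε ha0 hab hε0
  -- eventual bounds
  have hev1 : ∀ᶠ N : ℕ in atTop, r N / N < α / b :=
    hρ0.eventually (eventually_lt_nhds (by positivity))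
  have hev2 : ∀ᶠ N : ℕ in atTop, r N / N < α/8/(b-a) :=
    hρ0.eventually (eventually_lt_nhds (by positivity))
  have hev3 : ∀ᶠ N : ℕ in atTop, 1 ≤ N := eventually_ge_atTop 1
  have hGt : Tendsto (fun N : ℕ => 1 - prob (μ N) (fun η =>
      sSup ((fun u => |r N / (N : ℝ) * (nuAbove η (r N * u) : ℝ) - l u|) '' Set.Icc a b) < ε))
      atTop (𝓝 0) := by
    have := (tendsto_const_nhds (x := (1:ℝ)) (f := atTop)).sub hG
    simpa using this
  apply tendsto_of_tendsto_of_tendsto_of_le_of_le' (tendsto_const_nhds (x := (0:ℝ))) hGt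
  · filter_upwards [hev3] with N hN
    exact Finset.sum_nonneg fun η _ => (hμ N hN).1 η
  · filter_upwards [hev1, hev2, hev3] with N h1 h2 h3
    refine aux_prob_le _ (hμ N h3).1 (hμ N h3).2 _ _ ?_
    intro η hB hGη
    have hN0 : (0:ℝ) < N := by exact_mod_cast h3
    have hr0 : 0 < r N := hrpos N h3
    have hρnn : 0 ≤ r N / N := by positivity
    -- bounded above
    have hbdd : BddAbove ((fun u => |r N / (N:ℝ) * (nuAbove η (r N * u) : ℝ) - l u|) '' Set.Icc a b) := by
      refine ⟨r N / N * (Multiset.card η.parts : ℝ) + l a, ?_⟩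
      rintro x ⟨v, hv, rfl⟩
      have hν : (nuAbove η (r N * v) : ℝ) ≤ (Multiset.card η.parts : ℝ) := by
        rw [nuAbove_eq]
        exact_mod_cast Multiset.card_le_card (Multiset.filter_le _ _)
      have hlv : 0 ≤ l v := hlnn v (le_trans ha0.le hv.1)
      have hlva : l v ≤ l a := hanti ha0.le (le_trans ha0.le hv.1) hv.1
      have htri : |r N / (N:ℝ) * (nuAbove η (r N * v) : ℝ) - l v|
          ≤ |r N / (N:ℝ) * (nuAbove η (r N * v) : ℝ)| + |l v| := by
        rw [sub_eq_add_neg]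
        exact (abs_add_le _ _).trans (by rw [abs_neg])
      have h1' : |r N / (N:ℝ) * (nuAbove η (r N * v) : ℝ)|
          = r N / (N:ℝ) * (nuAbove η (r N * v) : ℝ) := abs_of_nonneg (by positivity)
      have h2' : |l v| = l v := abs_of_nonneg hlv
      rw [h1', h2'] at htri
      have : r N / (N:ℝ) * (nuAbove η (r N * v) : ℝ) ≤ r N / N * (Multiset.card η.parts : ℝ) :=
        mul_le_mul_of_nonneg_left hν hρnn
      linarith
    -- pointwise bounds
    have hpt : ∀ i ∈ Finset.range m, l (a + ((i:ℝ)+1)*Δ) - ε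
        < r N / N * (nuAbove η (r N * (a + ((i:ℝ)+1)*Δ)) : ℝ) := by
      intro i hi
      have him : (i:ℝ) + 1 ≤ (m:ℝ) := by exact_mod_cast Nat.succ_le_of_lt (Finset.mem_range.mp hi)
      have hmem : (a + ((i:ℝ)+1)*Δ) ∈ Set.Icc a b := by
        constructor
        · nlinarith [hΔ0.le, Nat.cast_nonneg (α := ℝ) i]
        · have h1'' : ((i:ℝ)+1)*Δ ≤ (m:ℝ)*Δ := mul_le_mul_of_nonneg_right him hΔ0.le
          rw [hmΔ] at h1''
          linarith
      have hle := le_csSup hbdd (Set.mem_image_of_mem _ hmem)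
      have hlt := lt_of_le_of_lt hle hGη
      have := (abs_lt.mp hlt).1
      linarith
    obtain ⟨S, hS⟩ : ∃ S : ℝ, S = ∑ i ∈ Finset.range m, (nuAbove η (r N * (a + ((i:ℝ)+1)*Δ)) : ℝ) :=
      ⟨_, rfl⟩
    have hsum : L - m * ε < r N / N * S := by
      have hlt := Finset.sum_lt_sum_of_nonempty (Finset.nonempty_range_iff.mpr (by omega)) hpt
      rw [Finset.sum_sub_distrib, Finset.sum_const, Finset.card_range, nsmul_eq_mul,
        ← Finset.mul_sum] at hlt
      rw [hL, hS]
      exact hlt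
    have hgel : r N * (a + (m:ℝ) * Δ) ≤ α * N := by
      have hb' : a + (m:ℝ)*Δ = b := by rw [hmΔ]; ring
      rw [hb']
      have : r N < α/b * N := by
        have := (div_lt_iff₀ hN0).mp h1
        linarith [mul_comm (α / b) (N:ℝ)]
      have hb0 : (0:ℝ) < b := by linarith
      rw [div_mul_eq_mul_div] at this
      calc r N * b ≤ (α * N / b) * b := by nlinarith
        _ = α * N := by field_simp
    have hkey := aux_key η (r N) α a Δ m hr0 ha0 hΔ0 hα0 hB hgel
    rw [← hS] at hkey
    have hrΔm : r N * Δ * (m:ℝ) ≤ α/8 * N := by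
      have hra : r N * (b - a) ≤ α/8 * N := by
        have h2' := (div_lt_iff₀ hN0).mp h2
        have h2'' := mul_lt_mul_of_pos_right h2' hba
        have heq : (α/8/(b-a) * (N:ℝ)) * (b-a) = α/8 * N := by field_simp
        linarith only [h2'', heq]
      calc r N * Δ * (m:ℝ) = r N * ((m:ℝ)*Δ) := by ring
        _ = r N * (b - a) := by rw [hmΔ]
        _ ≤ α/8 * N := hra
    have hB2 : Δ * N * L - Δ * N * ((m:ℝ)*ε) < r N * Δ * S := by
      have hmul := mul_lt_mul_of_pos_left hsum (mul_pos hΔ0 hN0)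
      have he : Δ * (N:ℝ) * (r N / N * S) = r N * Δ * S := by field_simp
      rw [mul_sub, he] at hmul
      linarith
    have hE : Δ * (N:ℝ) * ((m:ℝ)*ε) = α/8 * N := by
      have : Δ * (N:ℝ) * ((m:ℝ)*ε) = ((m:ℝ)*Δ) * ε * N := by ring
      rw [this, hmΔ, mul_comm (b - a) ε, hεba]
    have hF : (1 - α/4 - α/8) * N < Δ * N * L := by
      have := mul_lt_mul_of_pos_right hΔL hN0
      linarith only [this]
    linarith only [hkey, hB2, hE, hF, hrΔm, mul_pos hα0 hN0]
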